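/- Suppose $H : (1,\infty) \times [0,T) \times (0,\infty) \to [0,\infty)$ satisfies, for all $p \ge p_0 > 1$, $0 \le \tau < \tau' < T$, $0 < r' < r$: $H(\tfrac{3}{2}p, \tau', r') \le A\left(\hat{C}(\tau') + \frac{1}{\tau' - \tau} + \frac{C_1}{(r - r')^2}\right)^{3/2} H(p, \tau, r)^{3/2}$, where $\hat{C}(\tau') = C_p \mu^3 A^2 (\tau')^{-1}$ with $C_p$ bounded uniformly by $C$ for $p \ge p_0$, and $H$ is nonincreasing in $\tau$ and nondecreasing in $r$. Fix $t \in (0,T)$ and $r > 0$, and set $p_k = p_0 (3/2)^k$, $\tau_k = t(1 - (3/2)^{-k-1})$, $r_k = \frac{r}{2}(1 + (3/2)^{-k/2})$. Then there is a constant $C'$ depending only on $C$, $C_1$, $p_0$ such that $\limsup_{k \to \infty} H(p_k, \tau_k, r_k)^{1/p_k} \le C' A^{2/p_0} \left((1 + A^2\mu^3) t^{-1} + r^{-2}\right)^{3/p_0} H(p_0, 0, r)^{1/p_0}$. -/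

import Mathlib

open Filter Real

private lemma aux_v2 : (3/2:ℝ)^(-(2:ℝ)) = 4/9 := by
  rw [show (-2:ℝ) = -((2:ℕ):ℝ) by norm_num, Real.rpow_neg (by norm_num), Real.rpow_natCast]
  norm_num

private lemma aux_56 : (3/2:ℝ)^(-(1:ℝ)/2) ≤ 5/6 := by
  have hs : ((3/2:ℝ)^((1:ℝ)/2))^2 = 3/2 := by
    rw [← Real.rpow_natCast ((3/2:ℝ)^((1:ℝ)/2)) 2, ← Real.rpow_mul (by norm_num : (0:ℝ) ≤ 3/2)]
    norm_num
  have hposx : (0:ℝ) < (3/2:ℝ)^((1:ℝ)/2) := Real.rpow_pos_of_pos (by norm_num) _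
  have h65 : (6/5:ℝ) ≤ (3/2:ℝ)^((1:ℝ)/2) := by nlinarith
  have he : (3/2:ℝ)^(-(1:ℝ)/2) = ((3/2:ℝ)^((1:ℝ)/2))⁻¹ := by
    rw [show -(1:ℝ)/2 = -((1:ℝ)/2) by ring, Real.rpow_neg (by norm_num : (0:ℝ) ≤ 3/2)]
  have hinv : ((3/2:ℝ)^((1:ℝ)/2))⁻¹ * ((3/2:ℝ)^((1:ℝ)/2)) = 1 := inv_mul_cancel₀ (ne_of_gt hposx)
  rw [he]
  nlinarith [inv_nonneg.mpr hposx.le]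

set_option maxHeartbeats 2000000 in
theorem stmt_9 (C C₁ p₀ : ℝ) (hC : 0 < C) (hC₁ : 0 < C₁) (hp₀ : 1 < p₀) :
    ∃ C' : ℝ, 0 < C' ∧
      ∀ (T A μ : ℝ) (H : ℝ → ℝ → ℝ → ℝ) (Cp : ℝ → ℝ),
        0 < T → 1 ≤ A → 0 ≤ μ →
        (∀ p τ r, 0 ≤ H p τ r) →
        (∀ p, p₀ ≤ p → 0 ≤ Cp p ∧ Cp p ≤ C) →
        (∀ p, p₀ ≤ p → ∀ τ τ' r r', 0 ≤ τ → τ < τ' → τ' < T → 0 < r' → r' < r →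
          H (3 / 2 * p) τ' r' ≤
            A * (Cp p * μ ^ 3 * A ^ 2 / τ' + 1 / (τ' - τ) + C₁ / (r - r') ^ 2) ^ ((3 : ℝ) / 2) *
              H p τ r ^ ((3 : ℝ) / 2)) →
        (∀ p r τ₁ τ₂, τ₁ ≤ τ₂ → H p τ₂ r ≤ H p τ₁ r) →
        (∀ p τ r₁ r₂, r₁ ≤ r₂ → H p τ r₁ ≤ H p τ r₂) →
        ∀ t r, 0 < t → t < T → 0 < r →
          limsup (fun k : ℕ =>
              H (p₀ * (3 / 2 : ℝ) ^ k) (t * (1 - (3 / 2 : ℝ) ^ (-(k : ℝ) - 1)))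
                  (r / 2 * (1 + (3 / 2 : ℝ) ^ (-(k : ℝ) / 2))) ^
                (1 / (p₀ * (3 / 2 : ℝ) ^ k))) atTop ≤
            C' * A ^ ((2 : ℝ) / p₀) * ((1 + A ^ 2 * μ ^ 3) / t + 1 / r ^ 2) ^ ((3 : ℝ) / p₀) *
              H p₀ 0 r ^ (1 / p₀) := by
  refine ⟨(27/8)^2 * (2*C + 5 + 144*C₁)^3, by positivity, ?_⟩
  intro T A μ H Cp hT hA hμ hH0 hCp hrec hmτ hmr t r ht htT hr
  set K : ℝ := 2*C + 5 + 144*C₁ with hKdef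
  clear_value K
  have hK1 : (1:ℝ) ≤ K := by simp only [hKdef]; nlinarith
  have hK0 : (0:ℝ) < K := by linarith
  set E : ℝ := (1 + A^2*μ^3)/t + 1/r^2 with hEdef
  clear_value E
  have hE0 : 0 < E := by rw [hEdef]; positivity
  have hA0 : (0:ℝ) < A := by linarith
  set M : ℝ := 27/8 * A * (K*E) ^ ((3:ℝ)/2) with hMdef
  clear_value M
  have hM0 : 0 < M := by
    rw [hMdef]
    exact mul_pos (mul_pos (by norm_num) hA0) (Real.rpow_pos_of_pos (mul_pos hK0 hE0) _)
  set f : ℕ → ℝ := fun k => H (p₀ * (3 / 2 : ℝ) ^ k) (t * (1 - (3 / 2 : ℝ) ^ (-(k : ℝ) - 1)))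
      (r / 2 * (1 + (3 / 2 : ℝ) ^ (-(k : ℝ) / 2))) with hfdef
  clear_value f
  have hf0 : ∀ k, 0 ≤ f k := by intro k; rw [hfdef]; exact hH0 _ _ _

  have h32 : (1:ℝ) < 3/2 := by norm_num
  have hpowpos : ∀ x:ℝ, (0:ℝ) < (3/2:ℝ)^x := fun x => rpow_pos_of_pos (by norm_num) x
  have hv2 : (3/2:ℝ)^(-(2:ℝ)) = 4/9 := aux_v2
  have hstep : ∀ k : ℕ, f (k+1) ≤ 8/27 * M * (3/2:ℝ) ^ (3*(k:ℝ)/2) * f k ^ ((3:ℝ)/2) := by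
    intro k
    have hk0 : (0:ℝ) ≤ (k:ℝ) := Nat.cast_nonneg k
    set y : ℝ := (3/2:ℝ)^((k:ℝ)) with hy
    clear_value y
    have hy1 : (1:ℝ) ≤ y := by
      rw [hy]; calc (1:ℝ) = (3/2:ℝ)^(0:ℝ) := (rpow_zero _).symm
        _ ≤ _ := rpow_le_rpow_of_exponent_le (by norm_num) hk0
    have hy0 : (0:ℝ) < y := by rw [hy]; exact hpowpos _
    have hp : p₀ ≤ p₀ * (3/2:ℝ)^k := le_mul_of_one_le_right (by linarith) (one_le_pow₀ (by norm_num))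
    set τ1 : ℝ := t * (1 - (3/2:ℝ)^(-(k:ℝ)-1)) with hτ1
    clear_value τ1
    set τ2 : ℝ := t * (1 - (3/2:ℝ)^(-(k:ℝ)-2)) with hτ2
    clear_value τ2
    set r1 : ℝ := r/2 * (1 + (3/2:ℝ)^(-(k:ℝ)/2)) with hr1
    clear_value r1
    set r2 : ℝ := r/2 * (1 + (3/2:ℝ)^((-(k:ℝ)-1)/2)) with hr2
    clear_value r2
    have hfk1 : f (k+1) = H (3/2 * (p₀ * (3/2:ℝ)^k)) τ2 r2 := by
      have e1 : p₀ * (3/2:ℝ)^(k+1) = 3/2*(p₀*(3/2:ℝ)^k) := by ring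
      have e2 : -(((k+1:ℕ)):ℝ) - 1 = -(k:ℝ)-2 := by push_cast; ring
      have e3 : -(((k+1:ℕ)):ℝ)/2 = (-(k:ℝ)-1)/2 := by push_cast; ring
      simp only [hfdef, hτ2, hr2]
      rw [e2, e3, e1]
    have hfk : f k = H (p₀ * (3/2:ℝ)^k) τ1 r1 := by simp only [hfdef, hτ1, hr1]
    have hτ1nn : 0 ≤ τ1 := by
      have h1 : (3/2:ℝ)^(-(k:ℝ)-1) ≤ 1 := rpow_le_one_of_one_le_of_nonpos (by norm_num) (by linarith)
      rw [hτ1]; exact mul_nonneg ht.le (by linarith)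
    have hτlt : τ1 < τ2 := by
      have h1 := rpow_lt_rpow_of_exponent_lt h32 (show -(k:ℝ)-2 < -(k:ℝ)-1 by linarith)
      rw [hτ1, hτ2]; exact mul_lt_mul_of_pos_left (by linarith) ht
    have hτ2t : τ2 < t := by
      have h1 := hpowpos (-(k:ℝ)-2)
      calc τ2 = t * (1 - (3/2:ℝ)^(-(k:ℝ)-2)) := hτ2
        _ < t * 1 := mul_lt_mul_of_pos_left (by linarith) ht
        _ = t := mul_one t
    have hτ2T : τ2 < T := lt_trans hτ2t htT
    have hr2pos : 0 < r2 := by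
      have := hpowpos ((-(k:ℝ)-1)/2); rw [hr2]; positivity
    have hr21 : r2 < r1 := by
      have h1 := rpow_lt_rpow_of_exponent_lt h32 (show (-(k:ℝ)-1)/2 < -(k:ℝ)/2 by linarith)
      rw [hr1, hr2]; exact mul_lt_mul_of_pos_left (by linarith) (half_pos hr)
    have hrec' := hrec (p₀ * (3/2:ℝ)^k) hp τ1 τ2 r1 r2 hτ1nn hτlt hτ2T hr2pos hr21
    rw [← hfk1, ← hfk] at hrec'
    -- bound the bracket
    set B : ℝ := Cp (p₀ * (3/2:ℝ)^k) * μ ^ 3 * A ^ 2 / τ2 + 1 / (τ2 - τ1) + C₁ / (r1 - r2) ^ 2 with hB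
    clear_value B
    obtain ⟨hCp0, hCpC⟩ := hCp _ hp
    have hAμ : (0:ℝ) ≤ A^2*μ^3 := mul_nonneg (sq_nonneg A) (pow_nonneg hμ 3)
    have h49 : (3/2:ℝ)^(-(k:ℝ)-2) ≤ 4/9 := by
      have h := rpow_le_rpow_of_exponent_le (show (1:ℝ) ≤ 3/2 by norm_num)
        (show -(k:ℝ)-2 ≤ -(2:ℝ) by linarith)
      rw [hv2] at h; exact h
    have hτ2ge : 5*t/9 ≤ τ2 := by
      rw [hτ2]
      calc 5*t/9 = t*(5/9) := by ring
        _ ≤ t*(1 - (3/2:ℝ)^(-(k:ℝ)-2)) := mul_le_mul_of_nonneg_left (by linarith) ht.le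
    have hτ2pos : 0 < τ2 := lt_of_lt_of_le (by positivity) hτ2ge
    have ht1 : Cp (p₀ * (3/2:ℝ)^k) * μ ^ 3 * A ^ 2 / τ2 ≤ 2*C*((1 + A^2*μ^3)/t) := by
      have h1 : Cp (p₀ * (3/2:ℝ)^k) * μ ^ 3 * A ^ 2 ≤ C * μ^3 * A^2 :=
        mul_le_mul_of_nonneg_right (mul_le_mul_of_nonneg_right hCpC (pow_nonneg hμ 3)) (sq_nonneg A)
      calc Cp (p₀ * (3/2:ℝ)^k) * μ ^ 3 * A ^ 2 / τ2 ≤ (C * μ^3*A^2) / (5*t/9) :=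
            div_le_div₀ (by positivity) h1 (by positivity) hτ2ge
        _ ≤ 2*C*((1 + A^2*μ^3)/t) := by
            rw [mul_div_assoc' (2*C), div_le_div_iff₀ (by positivity) ht]
            have h2 : C * μ^3*A^2 * t = C*t*(A^2*μ^3) := by ring
            have h3 : 2*C*(1+A^2*μ^3) * (5*t/9) = 10/9*(C*t) + 10/9*(C*t*(A^2*μ^3)) := by ring
            have h4 : 0 ≤ C*t*(A^2*μ^3) := mul_nonneg (mul_pos hC ht).le hAμ
            have h5 : 0 < C*t := mul_pos hC ht
            rw [h2, h3]; linarith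
    have hτd : τ2 - τ1 = t * (3/2:ℝ)^(-(k:ℝ)-2) / 2 := by
      have e : (3/2:ℝ)^(-(k:ℝ)-1) = (3/2:ℝ)^(-(k:ℝ)-2) * (3/2) := by
        rw [show -(k:ℝ)-1 = (-(k:ℝ)-2) + 1 by ring, rpow_add (by norm_num : (0:ℝ) < 3/2), rpow_one]
      rw [hτ1, hτ2, e]; ring
    have hxy : (3/2:ℝ)^(-(k:ℝ)-2) * y = 4/9 := by
      rw [hy, ← rpow_add (by norm_num : (0:ℝ) < 3/2), show -(k:ℝ)-2 + (k:ℝ) = -(2:ℝ) by ring, hv2]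
    have ht2 : 1/(τ2 - τ1) ≤ 5 * y * ((1 + A^2*μ^3)/t) := by
      have hx := hpowpos (-(k:ℝ)-2)
      rw [hτd, div_le_iff₀ (by positivity)]
      have e : 5 * y * ((1 + A^2*μ^3)/t) * (t * (3/2:ℝ)^(-(k:ℝ)-2)/2)
          = 5/2*(1+A^2*μ^3)*((3/2:ℝ)^(-(k:ℝ)-2)*y) := by field_simp
      rw [e, hxy]
      have h6 : 5/2*(1+A^2*μ^3)*(4/9:ℝ) = 10/9 + 10/9*(A^2*μ^3) := by ring
      rw [h6]; linarith
    have h56 : (3/2:ℝ)^(-(1:ℝ)/2) ≤ 5/6 := aux_56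
    have hz := hpowpos (-(k:ℝ)/2)
    have hsplit : (3/2:ℝ)^((-(k:ℝ)-1)/2) = (3/2:ℝ)^(-(k:ℝ)/2) * (3/2:ℝ)^(-(1:ℝ)/2) := by
      rw [← rpow_add (by norm_num : (0:ℝ) < 3/2)]; congr 1; ring
    have hrd : r/12 * (3/2:ℝ)^(-(k:ℝ)/2) ≤ r1 - r2 := by
      rw [hr1, hr2, hsplit]
      calc r/12 * (3/2:ℝ)^(-(k:ℝ)/2) = (r/2 * (3/2:ℝ)^(-(k:ℝ)/2)) * (1/6) := by ring
        _ ≤ (r/2 * (3/2:ℝ)^(-(k:ℝ)/2)) * (1 - (3/2:ℝ)^(-(1:ℝ)/2)) := by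
            apply mul_le_mul_of_nonneg_left (by linarith) (by positivity)
        _ = r/2 * (1 + (3/2:ℝ)^(-(k:ℝ)/2)) - r/2 * (1 + (3/2:ℝ)^(-(k:ℝ)/2) * (3/2:ℝ)^(-(1:ℝ)/2)) := by
            ring
    have hz2 : ((3/2:ℝ)^(-(k:ℝ)/2))^2 * y = 1 := by
      rw [hy, ← rpow_natCast ((3/2:ℝ)^(-(k:ℝ)/2)) 2, ← rpow_mul (by norm_num : (0:ℝ) ≤ 3/2),
        ← rpow_add (by norm_num : (0:ℝ) < 3/2),
        show -(k:ℝ)/2 * ((2:ℕ):ℝ) + (k:ℝ) = 0 by push_cast; ring, rpow_zero]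
    have ht3 : C₁ / (r1 - r2)^2 ≤ 144*C₁*y*(1/r^2) := by
      have hd0 : 0 < r/12 * (3/2:ℝ)^(-(k:ℝ)/2) := by positivity
      calc C₁/(r1-r2)^2 ≤ C₁/((r/12 * (3/2:ℝ)^(-(k:ℝ)/2))^2) := by
            apply div_le_div_of_nonneg_left hC₁.le (by positivity)
            exact pow_le_pow_left₀ hd0.le hrd 2
        _ = 144*C₁*y*(1/r^2) := by
            field_simp
            rw [neg_div] at hz2
            linear_combination (-144) * hz2
    have hBle : B ≤ y * K * E := by
      rw [hB, hEdef, hKdef]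
      have hE1 : (0:ℝ) ≤ (1 + A^2*μ^3)/t := by positivity
      have hE2 : (0:ℝ) ≤ 1/r^2 := by positivity
      have hx1 : (0:ℝ) ≤ 2*C*((1 + A^2*μ^3)/t)*(y-1) :=
        mul_nonneg (mul_nonneg (by linarith) hE1) (by linarith)
      have hx2 : (0:ℝ) ≤ 144*C₁*y*((1 + A^2*μ^3)/t) :=
        mul_nonneg (mul_nonneg (mul_nonneg (by norm_num) hC₁.le) hy0.le) hE1
      have hx3 : (0:ℝ) ≤ (2*C+5)*y*(1/r^2) :=
        mul_nonneg (mul_nonneg (by linarith) hy0.le) hE2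
      have hexp : y*(2*C+5+144*C₁)*((1 + A^2*μ^3)/t + 1/r^2)
          = 2*C*((1 + A^2*μ^3)/t) + 5*y*((1 + A^2*μ^3)/t) + 144*C₁*y*(1/r^2)
            + (2*C*((1 + A^2*μ^3)/t)*(y-1) + 144*C₁*y*((1 + A^2*μ^3)/t) + (2*C+5)*y*(1/r^2)) := by
        ring
      rw [hexp]; linarith
    have hB0 : 0 ≤ B := by
      rw [hB]
      have h1 : 0 ≤ Cp (p₀ * (3/2:ℝ)^k) * μ^3 * A^2 / τ2 :=
        div_nonneg (mul_nonneg (mul_nonneg hCp0 (pow_nonneg hμ 3)) (sq_nonneg A)) hτ2pos.le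
      have h2 : 0 ≤ 1/(τ2-τ1) := le_of_lt (div_pos one_pos (by linarith))
      have h3 : 0 ≤ C₁/(r1-r2)^2 := div_nonneg hC₁.le (sq_nonneg _)
      linarith
    have hfknn : (0:ℝ) ≤ f k ^ ((3:ℝ)/2) := rpow_nonneg (hf0 k) _
    have hBr : B ^ ((3:ℝ)/2) ≤ (y*K*E) ^ ((3:ℝ)/2) := rpow_le_rpow hB0 hBle (by norm_num)
    have hykE : (y*K*E) ^ ((3:ℝ)/2) = (3/2:ℝ)^(3*(k:ℝ)/2) * (K*E)^((3:ℝ)/2) := by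
      rw [mul_assoc, mul_rpow hy0.le (by positivity), hy,
        ← rpow_mul (by norm_num : (0:ℝ) ≤ 3/2)]
      congr 2; ring
    calc f (k+1) ≤ A * B ^ ((3:ℝ)/2) * f k ^ ((3:ℝ)/2) := hrec'
      _ ≤ A * ((y*K*E) ^ ((3:ℝ)/2)) * f k ^ ((3:ℝ)/2) := by
          exact mul_le_mul_of_nonneg_right (mul_le_mul_of_nonneg_left hBr hA0.le) hfknn
      _ = 8/27 * M * (3/2:ℝ)^(3*(k:ℝ)/2) * f k ^ ((3:ℝ)/2) := by
          rw [hykE, hMdef]; ring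
  have h32' : (0:ℝ) < 3/2 := by norm_num
  have h32'' : (0:ℝ) ≤ 3/2 := by norm_num
  have hM3 : (M^2:ℝ)^((3:ℝ)/2) = M^3 := by
    rw [← rpow_natCast M 2, ← rpow_mul hM0.le, show ((2:ℕ):ℝ)*((3:ℝ)/2) = ((3:ℕ):ℝ) by norm_num,
      rpow_natCast]
  have hiter : ∀ k : ℕ, M^2 * (3/2:ℝ) ^ (3*(k:ℝ)) * f k ≤ (M^2 * f 0) ^ ((3/2:ℝ)^k) := by
    intro k
    induction k with
    | zero =>
      simp only [Nat.cast_zero, mul_zero, rpow_zero, mul_one, pow_zero, rpow_one]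
      exact le_refl _
    | succ k ih =>
      have hb : (0:ℝ) ≤ M^2 * (3/2:ℝ)^(3*(k:ℝ)) * f k :=
        mul_nonneg (mul_nonneg (sq_nonneg M) (hpowpos _).le) (hf0 k)
      have hb0 : (0:ℝ) ≤ M^2 * f 0 := mul_nonneg (sq_nonneg M) (hf0 0)
      have hcast : 3*(((k+1:ℕ)):ℝ) = 3*(k:ℝ)+3 := by push_cast; ring
      have e1 : ((3/2:ℝ)^(3*(k:ℝ)))^((3:ℝ)/2) = (3/2:ℝ)^(9*(k:ℝ)/2) := by
        rw [← rpow_mul h32'']; congr 1; ring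
      have e2 : (3/2:ℝ)^(3*(k:ℝ)+3) * (3/2:ℝ)^(3*(k:ℝ)/2) = 27/8 * (3/2:ℝ)^(9*(k:ℝ)/2) := by
        rw [← rpow_add h32', show 3*(k:ℝ)+3 + 3*(k:ℝ)/2 = 9*(k:ℝ)/2 + ((3:ℕ):ℝ) by push_cast; ring,
          rpow_add h32', rpow_natCast]
        norm_num [mul_comm]
      have h1 : M^2 * (3/2:ℝ)^(3*((k+1:ℕ)):ℝ) * f (k+1)
          ≤ (M^2 * (3/2:ℝ)^(3*(k:ℝ)) * f k) ^ ((3:ℝ)/2) := by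
        rw [hcast]
        calc M^2 * (3/2:ℝ)^(3*(k:ℝ)+3) * f (k+1)
            ≤ M^2 * (3/2:ℝ)^(3*(k:ℝ)+3) * (8/27 * M * (3/2:ℝ)^(3*(k:ℝ)/2) * f k ^ ((3:ℝ)/2)) := by
              apply mul_le_mul_of_nonneg_left (hstep k)
              exact mul_nonneg (sq_nonneg M) (hpowpos _).le
          _ = M^3 * ((3/2:ℝ)^(3*(k:ℝ)+3) * (3/2:ℝ)^(3*(k:ℝ)/2)) * (8/27) * f k ^ ((3:ℝ)/2) := by
              ring
          _ = M^3 * (3/2:ℝ)^(9*(k:ℝ)/2) * f k ^ ((3:ℝ)/2) := by rw [e2]; ring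
          _ = (M^2 * (3/2:ℝ)^(3*(k:ℝ)) * f k) ^ ((3:ℝ)/2) := by
              rw [mul_rpow (mul_nonneg (sq_nonneg M) (hpowpos _).le) (hf0 k),
                mul_rpow (sq_nonneg M) (hpowpos _).le, hM3, e1]
      calc M^2 * (3/2:ℝ)^(3*((k+1:ℕ)):ℝ) * f (k+1)
          ≤ (M^2 * (3/2:ℝ)^(3*(k:ℝ)) * f k) ^ ((3:ℝ)/2) := h1
        _ ≤ ((M^2 * f 0) ^ ((3/2:ℝ)^k)) ^ ((3:ℝ)/2) := rpow_le_rpow hb ih (by norm_num)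
        _ = (M^2 * f 0) ^ ((3/2:ℝ)^(k+1)) := by
            rw [← rpow_mul hb0, ← pow_succ]
  -- conclusion
  have hp₀0 : (0:ℝ) < p₀ := by linarith
  have hb0 : (0:ℝ) ≤ M^2 * f 0 := mul_nonneg (sq_nonneg M) (hf0 0)
  have h278 : ∀ k:ℕ, (3/2:ℝ)^(3*(k:ℝ)) = (27/8:ℝ)^k := by
    intro k
    rw [show 3*(k:ℝ) = ((3*k:ℕ):ℝ) by push_cast; ring, rpow_natCast, pow_mul]
    norm_num
  obtain ⟨n, hn⟩ := pow_unbounded_of_one_lt (1/M^2 : ℝ) (show (1:ℝ) < 27/8 by norm_num)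
  have hfinal : ∀ᶠ k in atTop, f k ^ (1/(p₀ * (3/2:ℝ)^k)) ≤ (M^2 * f 0)^(1/p₀) := by
    filter_upwards [eventually_ge_atTop n] with k hk
    have hMk : 1 ≤ M^2 * (27/8:ℝ)^k := by
      have h1 : (27/8:ℝ)^n ≤ (27/8:ℝ)^k := pow_le_pow_right₀ (by norm_num) hk
      have h2 : 1/M^2 < M^2 * (27/8:ℝ)^k / M^2 := by
        rw [mul_comm, mul_div_assoc, div_self (by positivity), mul_one]
        exact lt_of_lt_of_le hn h1
      have h3 : (0:ℝ) < M^2 := by positivity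
      rw [div_lt_div_iff₀ h3 h3] at h2
      nlinarith
    have h1 : f k ≤ (M^2 * f 0)^((3/2:ℝ)^k) := by
      have h4 := hiter k
      rw [h278 k] at h4
      have h5 : 1 * f k ≤ M^2 * (27/8:ℝ)^k * f k := mul_le_mul_of_nonneg_right hMk (hf0 k)
      rw [one_mul] at h5
      linarith
    have h2 : f k ^ (1/(p₀*(3/2:ℝ)^k)) ≤ ((M^2 * f 0)^((3/2:ℝ)^k)) ^ (1/(p₀*(3/2:ℝ)^k)) :=
      rpow_le_rpow (hf0 k) h1 (by positivity)
    have h3 : ((M^2 * f 0)^((3/2:ℝ)^k)) ^ (1/(p₀*(3/2:ℝ)^k)) = (M^2 * f 0)^(1/p₀) := by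
      rw [← rpow_mul hb0]
      congr 1
      have hne : ((3/2:ℝ)^k) ≠ 0 := by positivity
      field_simp
    rw [h3] at h2
    exact h2
  have hgoalfun : (fun k : ℕ =>
      H (p₀ * (3 / 2 : ℝ) ^ k) (t * (1 - (3 / 2 : ℝ) ^ (-(k : ℝ) - 1)))
          (r / 2 * (1 + (3 / 2 : ℝ) ^ (-(k : ℝ) / 2))) ^ (1 / (p₀ * (3 / 2 : ℝ) ^ k)))
      = fun k : ℕ => f k ^ (1/(p₀ * (3/2:ℝ)^k)) := by
    funext k; rw [hfdef]
  rw [hgoalfun]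
  have hlim : limsup (fun k : ℕ => f k ^ (1/(p₀*(3/2:ℝ)^k))) atTop ≤ (M^2 * f 0)^(1/p₀) :=
    limsup_le_of_le (isCoboundedUnder_le_of_le atTop (x := 0)
      (fun k => rpow_nonneg (hf0 k) _)) hfinal
  refine le_trans hlim ?_
  -- compare constants
  have hf0r : f 0 ≤ H p₀ 0 r := by
    rw [hfdef]
    have e2 : (3/2:ℝ)^(-((0:ℕ):ℝ)-1) ≤ 1 :=
      rpow_le_one_of_one_le_of_nonpos (by norm_num) (by norm_num)
    have e3 : r/2 * (1+(3/2:ℝ)^(-((0:ℕ):ℝ)/2)) = r := by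
      rw [show -((0:ℕ):ℝ)/2 = 0 by norm_num, rpow_zero]; ring
    have e1 : p₀ * (3/2:ℝ)^(0:ℕ) = p₀ := by norm_num
    show H (p₀ * (3/2:ℝ)^(0:ℕ)) (t * (1 - (3/2:ℝ)^(-((0:ℕ):ℝ)-1))) (r/2 * (1+(3/2:ℝ)^(-((0:ℕ):ℝ)/2))) ≤ H p₀ 0 r
    rw [e1, e3]
    exact hmτ p₀ r 0 _ (mul_nonneg ht.le (by linarith))
  have hM2 : (M^2:ℝ)^(1/p₀) = M^((2:ℝ)/p₀) := by
    rw [← rpow_natCast M 2, ← rpow_mul hM0.le]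
    congr 1; push_cast; ring
  have hKE : ((K*E)^((3:ℝ)/2))^((2:ℝ)/p₀) = K^((3:ℝ)/p₀) * E^((3:ℝ)/p₀) := by
    rw [← rpow_mul (mul_pos hK0 hE0).le, show (3:ℝ)/2*((2:ℝ)/p₀) = (3:ℝ)/p₀ by field_simp,
      mul_rpow hK0.le hE0.le]
  have hMsplit : M^((2:ℝ)/p₀) = (27/8:ℝ)^((2:ℝ)/p₀) * A^((2:ℝ)/p₀) * (K^((3:ℝ)/p₀) * E^((3:ℝ)/p₀)) := by
    rw [hMdef, mul_rpow (by positivity) (rpow_nonneg (mul_pos hK0 hE0).le _),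
      mul_rpow (by norm_num) hA0.le, hKE]
  have h278b : (27/8:ℝ)^((2:ℝ)/p₀) ≤ (27/8:ℝ)^2 := by
    rw [← rpow_natCast (27/8:ℝ) 2]
    apply rpow_le_rpow_of_exponent_le (by norm_num)
    rw [div_le_iff₀ hp₀0]; push_cast; nlinarith
  have hK3 : K^((3:ℝ)/p₀) ≤ K^3 := by
    rw [← rpow_natCast K 3]
    apply rpow_le_rpow_of_exponent_le hK1
    rw [div_le_iff₀ hp₀0]; push_cast; nlinarith
  have hfact : (M^2 * f 0)^(1/p₀) ≤ (27/8)^2*K^3 * A^((2:ℝ)/p₀) * E^((3:ℝ)/p₀) * H p₀ 0 r^(1/p₀) := by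
    rw [mul_rpow (sq_nonneg M) (hf0 0), hM2, hMsplit]
    have hstep1 : (27/8:ℝ)^((2:ℝ)/p₀) * A^((2:ℝ)/p₀) * (K^((3:ℝ)/p₀) * E^((3:ℝ)/p₀))
        ≤ (27/8:ℝ)^2 * A^((2:ℝ)/p₀) * (K^3 * E^((3:ℝ)/p₀)) := by
      apply mul_le_mul
      · exact mul_le_mul_of_nonneg_right h278b (rpow_nonneg hA0.le _)
      · exact mul_le_mul_of_nonneg_right hK3 (rpow_nonneg hE0.le _)
      · exact mul_nonneg (rpow_nonneg hK0.le _) (rpow_nonneg hE0.le _)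
      · exact mul_nonneg (pow_nonneg (by norm_num) 2) (rpow_nonneg hA0.le _)
    have hstep2 : f 0 ^ (1/p₀) ≤ H p₀ 0 r ^ (1/p₀) :=
      rpow_le_rpow (hf0 0) hf0r (by positivity)
    calc (27/8:ℝ)^((2:ℝ)/p₀) * A^((2:ℝ)/p₀) * (K^((3:ℝ)/p₀) * E^((3:ℝ)/p₀)) * f 0 ^ (1/p₀)
        ≤ (27/8:ℝ)^2 * A^((2:ℝ)/p₀) * (K^3 * E^((3:ℝ)/p₀)) * (H p₀ 0 r ^ (1/p₀)) := by
          apply mul_le_mul hstep1 hstep2 (rpow_nonneg (hf0 0) _)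
          positivity
      _ = (27/8)^2*K^3 * A^((2:ℝ)/p₀) * E^((3:ℝ)/p₀) * H p₀ 0 r^(1/p₀) := by ring
  exact hfact
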